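/- arXiv:2511.08529 — 4 statements merged into one kernel-verified Lean document; each statement's English description precedes it below -/
import Mathlib

section
/- For every positive integer k, the number of EVEN colored compositions of k equals the number of ternary strings of length k over the alphabet {0,1,2} such that: every 0 is immediately followed (if anything) by a 0 or a 2, every 1 is immediately followed (if anything) by a 1 or a 0, the string does not begin with a 2, and the string does not end with a 0. -/
/-- The number of EVEN colored compositions of `ℓ`: compositions where each part
in an even position `i` (positions counted from 1) gets a color in `{1, …, pᵢ}`,
i.e. `∑` over compositions of `∏` of the parts in even positions. -/
def evenColoredCount (ℓ : ℕ) : ℕ :=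
  ∑ c : Composition ℓ, ∏ i ∈ Finset.range c.blocks.length,
    if (i + 1) % 2 = 0 then c.blocks.getD i 1 else 1


open Finset List

section StringSide

/-- transition relation for the ternary strings -/
def TStep (a b : Fin 3) : Prop := (a = 0 → b = 0 ∨ b = 2) ∧ (a = 1 → b = 1 ∨ b = 0)

instance TStep.dec : ∀ a b, Decidable (TStep a b) := fun a b => by
  unfold TStep; infer_instance

/-- transfer-matrix count -/
def gcount : ℕ → Fin 3 → ℕ
  | 0, a => if a = 0 then 0 else 1
  | n+1, a => ∑ b : Fin 3, if TStep a b then gcount n b else 0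

/-- strings (as lists) of length `n` that validly continue `a` and whose last symbol
(`a` if empty) is nonzero -/
def TS (n : ℕ) (a : Fin 3) : Type :=
  {l : List (Fin 3) // l.length = n ∧ List.Chain' TStep (a :: l) ∧ l.getLastD a ≠ 0}

instance TS.finite (n : ℕ) (a : Fin 3) : Finite (TS n a) := by
  haveI : Finite {l : List (Fin 3) // l.length = n} := Finite.of_fintype (List.Vector (Fin 3) n)
  apply Finite.of_injective (fun s : TS n a => (⟨s.1, s.2.1⟩ : {l : List (Fin 3) // l.length = n}))
  rintro ⟨l, hl⟩ ⟨l', hl'⟩ h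
  exact Subtype.ext (congrArg (fun v : {l : List (Fin 3) // l.length = n} => v.1) h)

def TS_succ_equiv (n : ℕ) (a : Fin 3) :
    TS (n+1) a ≃ Σ b : {b : Fin 3 // TStep a b}, TS n b where
  toFun := fun s =>
    match s with
    | ⟨[], h⟩ => absurd h.1 (by simp)
    | ⟨b :: t, h⟩ =>
      ⟨⟨b, (List.isChain_cons_cons.mp h.2.1).1⟩,
       ⟨t, by simpa using h.1, (List.isChain_cons_cons.mp h.2.1).2,
        by have := h.2.2; rwa [List.getLastD_cons] at this⟩⟩
  invFun := fun x =>
    ⟨x.1.1 :: x.2.1, by simp [x.2.2.1],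
      List.isChain_cons_cons.mpr ⟨x.1.2, x.2.2.2.1⟩,
      by rw [List.getLastD_cons]; exact x.2.2.2.2⟩
  left_inv := fun s => by
    obtain ⟨l, hl⟩ := s
    cases l with
    | nil => simp at hl
    | cons b t => rfl
  right_inv := fun x => rfl

lemma nat_card_sigma {ι : Type*} [Fintype ι] (F : ι → Type*) [∀ i, Finite (F i)] :
    Nat.card (Σ i, F i) = ∑ i, Nat.card (F i) := by
  classical
  haveI := fun i => Fintype.ofFinite (F i)
  simp [Nat.card_eq_fintype_card]

lemma card_TS : ∀ (n : ℕ) (a : Fin 3), Nat.card (TS n a) = gcount n a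
  | 0, a => by
    by_cases h : a = 0
    · subst h
      have : IsEmpty (TS 0 (0 : Fin 3)) := by
        constructor; rintro ⟨l, hl, -, hlast⟩
        rw [List.length_eq_zero_iff] at hl; subst hl
        exact hlast rfl
      simp [gcount]
    · have : Unique (TS 0 a) := by
        constructor
        case toInhabited => exact ⟨⟨[], rfl, List.IsChain.singleton a, h⟩⟩
        rintro ⟨l, hl, -, -⟩
        have : l = [] := List.length_eq_zero_iff.mp hl
        subst this; rfl
      rw [Nat.card_unique, show gcount 0 a = if a = 0 then 0 else 1 from rfl, if_neg h]
  | n+1, a => by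
    classical
    rw [Nat.card_congr (TS_succ_equiv n a), nat_card_sigma]
    simp only [card_TS n]
    rw [show gcount (n+1) a = ∑ b : Fin 3, if TStep a b then gcount n b else 0 from rfl]
    rw [← Finset.sum_filter]
    exact (Finset.sum_subtype _ (by simp) _).symm

end StringSide

section CompSide

def wcomp : Bool → List ℕ → ℕ
  | _, [] => 1
  | b, p :: l => (if b then p else 1) * wcomp (!b) l

def SA (b : Bool) (ℓ : ℕ) : ℕ := ∑ c : Composition ℓ, wcomp b c.blocks

lemma prod_eq_wcomp (l : List ℕ) (b : Bool) :
    (∏ i ∈ Finset.range l.length,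
      if (i + (cond b 0 1)) % 2 = 0 then l.getD i 1 else 1) = wcomp b l := by
  induction l generalizing b with
  | nil => simp [wcomp]
  | cons p t ih =>
    rw [List.length_cons, Finset.prod_range_succ']
    have h0 : (if (0 + (cond b 0 1)) % 2 = 0 then (p :: t).getD 0 1 else 1)
        = if b then p else 1 := by cases b <;> simp
    have h1 : ∀ i, (if (i + 1 + (cond b 0 1)) % 2 = 0 then (p :: t).getD (i+1) 1 else 1)
        = if (i + (cond (!b) 0 1)) % 2 = 0 then t.getD i 1 else 1 := by
      intro i
      cases b
      · simp only [Bool.not_false, Bool.cond_true, Bool.cond_false, Nat.add_zero,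
          List.getD_cons_succ]
        rw [show i + 1 + 1 = i + 2 from rfl, Nat.add_mod_right]
      · simp only [Bool.not_true, Bool.cond_true, Bool.cond_false, Nat.add_zero,
          List.getD_cons_succ]
    rw [h0, Finset.prod_congr rfl (fun i _ => h1 i), ih (!b)]
    rw [show wcomp b (p :: t) = (if b then p else 1) * wcomp (!b) t from rfl, Nat.mul_comm]

lemma evenColoredCount_eq_SA (ℓ : ℕ) : evenColoredCount ℓ = SA false ℓ := by
  unfold evenColoredCount SA
  refine Finset.sum_congr rfl fun c _ => ?_
  simpa using prod_eq_wcomp c.blocks false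

lemma comp_zero_blocks (c : Composition 0) : c.blocks = [] := by
  cases hb : c.blocks with
  | nil => rfl
  | cons p t =>
    exfalso
    have hs := c.blocks_sum
    rw [hb] at hs
    have : 0 < p := c.blocks_pos (hb ▸ (List.mem_cons_self (a := p) (l := t)))
    simp at hs; omega

lemma SA_zero (b : Bool) : SA b 0 = 1 := by
  unfold SA
  have : ∀ c : Composition 0, wcomp b c.blocks = 1 := fun c => by
    rw [comp_zero_blocks c]; cases b <;> rfl
  rw [Finset.sum_congr rfl fun c _ => this c]
  simp [Finset.card_univ, composition_card]

lemma comp_blocks_ne_nil {n : ℕ} (c : Composition (n+1)) : c.blocks ≠ [] := by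
  intro h
  have := c.blocks_sum
  rw [h] at this; simp at this

lemma comp_headI_pos {n : ℕ} (c : Composition (n+1)) : 0 < c.blocks.headI := by
  cases hb : c.blocks with
  | nil => exact absurd hb (comp_blocks_ne_nil c)
  | cons p t =>
    refine c.blocks_pos ?_
    rw [hb]; simp

lemma comp_headI_le {n : ℕ} (c : Composition (n+1)) : c.blocks.headI ≤ n + 1 := by
  conv_rhs => rw [← c.blocks_sum]
  cases hb : c.blocks with
  | nil => exact absurd hb (comp_blocks_ne_nil c)
  | cons p t => simp

def tailC {n : ℕ} (c : Composition (n+1)) : Composition (n+1 - c.blocks.headI) where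
  blocks := c.blocks.tail
  blocks_pos := fun hi => c.blocks_pos (List.mem_of_mem_tail hi)
  blocks_sum := by
    cases hb : c.blocks with
    | nil => exact absurd hb (comp_blocks_ne_nil c)
    | cons p t =>
      have hs := c.blocks_sum
      rw [hb] at hs
      simp at hs ⊢
      omega

def consC (q : ℕ) (hq : 0 < q) {m n : ℕ} (hm : q + m = n) (d : Composition m) :
    Composition n where
  blocks := q :: d.blocks
  blocks_pos := by
    rintro i hi
    rcases List.mem_cons.mp hi with rfl | h
    · exact hq
    · exact d.blocks_pos h
  blocks_sum := by simp [d.blocks_sum, hm]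

lemma sigma_comp_ext {p q : ℕ} {c : Composition p} {d : Composition q}
    (h : p = q) (hb : c.blocks = d.blocks) :
    (⟨p, c⟩ : Σ n : ℕ, Composition n) = ⟨q, d⟩ := by
  subst h
  exact congrArg _ (Composition.ext hb)

lemma SA_succ (b : Bool) (n : ℕ) :
    SA b (n+1) = ∑ p ∈ Finset.range (n+1), (if b then n+1-p else 1) * SA (!b) p := by
  classical
  unfold SA
  have key : ∑ c : Composition (n+1), wcomp b c.blocks
      = ∑ x ∈ (Finset.range (n+1)).sigma (fun p => (Finset.univ : Finset (Composition p))),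
          wcomp b ((n+1 - x.1) :: x.2.blocks) := by
    refine Finset.sum_bij'
      (i := fun (c : Composition (n+1)) (_ : c ∈ Finset.univ) =>
        (⟨n+1 - c.blocks.headI, tailC c⟩ : Σ p : ℕ, Composition p))
      (j := fun x hx => consC (n+1 - x.1)
        (by have := Finset.mem_range.mp (Finset.mem_sigma.mp hx).1; omega)
        (by have := Finset.mem_range.mp (Finset.mem_sigma.mp hx).1; omega) x.2)
      ?_ ?_ ?_ ?_ ?_
    · intro c _
      rw [Finset.mem_sigma]
      refine ⟨Finset.mem_range.mpr ?_, Finset.mem_univ _⟩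
      show n + 1 - c.blocks.headI < n + 1
      have := comp_headI_pos c
      have := comp_headI_le c
      omega
    · intro x hx
      exact Finset.mem_univ _
    · intro c _
      refine Composition.ext ?_
      show (n+1 - (n+1 - c.blocks.headI)) :: c.blocks.tail = c.blocks
      have h1 := comp_headI_le c
      rw [Nat.sub_sub_self h1]
      cases hb : c.blocks with
      | nil => exact absurd hb (comp_blocks_ne_nil c)
      | cons p t => simp
    · intro x hx
      have hp := Finset.mem_range.mp (Finset.mem_sigma.mp hx).1
      refine sigma_comp_ext ?_ ?_
      · show n + 1 - (consC _ _ _ _).blocks.headI = x.1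
        show n + 1 - ((n+1 - x.1) :: x.2.blocks).headI = x.1
        simp only [List.headI]
        omega
      · rfl
    · intro c _
      have h1 := comp_headI_le c
      show wcomp b c.blocks = wcomp b ((n + 1 - (n + 1 - c.blocks.headI)) :: c.blocks.tail)
      rw [Nat.sub_sub_self h1]
      cases hb : c.blocks with
      | nil => exact absurd hb (comp_blocks_ne_nil c)
      | cons p t => simp
  rw [key, Finset.sum_sigma]
  refine Finset.sum_congr rfl fun p hp => ?_
  rw [Finset.mul_sum]
  refine Finset.sum_congr rfl fun d _ => ?_
  rfl

end CompSide

section Bridge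

lemma gcount_succ (n : ℕ) :
    gcount (n+1) 0 = gcount n 0 + gcount n 2 ∧
    gcount (n+1) 1 = gcount n 0 + gcount n 1 ∧
    gcount (n+1) 2 = gcount n 0 + gcount n 1 + gcount n 2 := by
  have hdef : ∀ a, gcount (n+1) a = ∑ b : Fin 3, if TStep a b then gcount n b else 0 :=
    fun a => rfl
  refine ⟨?_, ?_, ?_⟩
  · rw [hdef, Fin.sum_univ_three, if_pos (by decide), if_neg (by decide),
      if_pos (by decide)]
    omega
  · rw [hdef, Fin.sum_univ_three, if_pos (by decide), if_pos (by decide),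
      if_neg (by decide)]
    omega
  · rw [hdef, Fin.sum_univ_three, if_pos (by decide), if_pos (by decide),
      if_pos (by decide)]

lemma bridge (ℓ : ℕ) :
    SA false (ℓ+1) = gcount ℓ 0 + gcount ℓ 1 ∧
    SA true (ℓ+1) = gcount ℓ 0 + gcount ℓ 2 ∧
    (∑ j ∈ Finset.range (ℓ+2), SA false j) = gcount ℓ 0 + gcount ℓ 1 + gcount ℓ 2 := by
  induction ℓ with
  | zero =>
    have h1 : SA false 1 = 1 := by
      rw [SA_succ]; simp [SA_zero]
    have h2 : SA true 1 = 1 := by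
      rw [SA_succ]; simp [SA_zero]
    refine ⟨?_, ?_, ?_⟩
    · rw [show (0:ℕ)+1 = 1 from rfl, h1]; decide
    · rw [show (0:ℕ)+1 = 1 from rfl, h2]; decide
    · rw [show (0:ℕ)+2 = 2 from rfl, Finset.sum_range_succ, Finset.sum_range_one,
        SA_zero, h1]
      decide
  | succ ℓ ih =>
    obtain ⟨hA, hB, hC⟩ := ih
    have hfalse : ∀ N, SA false (N+1) = ∑ p ∈ Finset.range (N+1), SA true p := by
      intro N; rw [SA_succ]; simp
    have f1 : SA false (ℓ+2) = SA false (ℓ+1) + SA true (ℓ+1) := by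
      rw [hfalse (ℓ+1), Finset.sum_range_succ, ← hfalse ℓ]
    have f2 : SA true (ℓ+2) = SA true (ℓ+1) + ∑ j ∈ Finset.range (ℓ+2), SA false j := by
      rw [SA_succ]
      simp only [if_pos, Bool.not_true]
      have step1 : ∀ p ∈ Finset.range (ℓ+2),
          (ℓ + 2 - p) * SA false p = (ℓ + 1 - p) * SA false p + SA false p := by
        intro p hp
        have := Finset.mem_range.mp hp
        have : ℓ + 2 - p = (ℓ + 1 - p) + 1 := by omega
        rw [this, Nat.add_mul, Nat.one_mul]
      rw [Finset.sum_congr rfl step1, Finset.sum_add_distrib]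
      congr 1
      rw [Finset.sum_range_succ, Nat.sub_self, Nat.zero_mul, Nat.add_zero, SA_succ]
      simp
    obtain ⟨g0, g1, g2⟩ := gcount_succ ℓ
    have hCC : ∑ j ∈ Finset.range (ℓ+3), SA false j
        = (∑ j ∈ Finset.range (ℓ+2), SA false j) + SA false (ℓ+2) :=
      Finset.sum_range_succ _ _
    refine ⟨?_, ?_, ?_⟩
    · rw [f1, hA, hB, g0, g1]; omega
    · rw [f2, hB, hC, g0, g2]
    · rw [hCC, hC, f1, hA, hB, g0, g1, g2]; omega

end Bridge

section Top

lemma getLastD_eq_getElem {α : Type*} (l : List α) (a : α) :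
    l.getLastD a = (a :: l)[l.length]'(by simp) := by
  induction l generalizing a with
  | nil => rfl
  | cons b t ih =>
    rw [List.getLastD_cons, ih b]
    simp

def topEquiv (m : ℕ) :
    {f : Fin (m+1) → Fin 3 //
      (∀ (i : ℕ) (h : i + 1 < m+1),
        (f ⟨i, Nat.lt_of_succ_lt h⟩ = 0 → f ⟨i + 1, h⟩ = 0 ∨ f ⟨i + 1, h⟩ = 2) ∧
        (f ⟨i, Nat.lt_of_succ_lt h⟩ = 1 → f ⟨i + 1, h⟩ = 1 ∨ f ⟨i + 1, h⟩ = 0)) ∧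
      f ⟨0, Nat.succ_pos m⟩ ≠ 2 ∧
      f ⟨m+1-1, Nat.sub_lt (Nat.succ_pos m) Nat.one_pos⟩ ≠ 0}
    ≃ Σ a : {a : Fin 3 // a ≠ 2}, TS m a where
  toFun s :=
    ⟨⟨s.1 ⟨0, Nat.succ_pos m⟩, s.2.2.1⟩,
     ⟨List.ofFn (fun i : Fin m => s.1 i.succ), by simp, by
        have hc : List.Chain' TStep (List.ofFn s.1) := by
          refine List.isChain_iff_getElem.mpr fun i h => ?_
          rw [List.getElem_ofFn, List.getElem_ofFn]
          have hi : i + 1 < m + 1 := by simpa using h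
          exact s.2.1 i hi
        rw [List.ofFn_succ] at hc
        exact hc, by
        rw [getLastD_eq_getElem]
        have he : (s.1 ⟨0, Nat.succ_pos m⟩ :: List.ofFn fun i : Fin m => s.1 i.succ)
            = List.ofFn s.1 := (List.ofFn_succ (f := s.1)).symm
        simp only [he, List.getElem_ofFn, List.length_ofFn]
        exact s.2.2.2⟩⟩
  invFun x :=
    ⟨fun i => (x.1.1 :: x.2.1)[i.1]'(by simp [x.2.2.1, i.2]), by
      refine ⟨fun i h => ?_, ?_, ?_⟩
      · have hc := x.2.2.2.1
        have hlen : (x.1.1 :: x.2.1).length = m + 1 := by simp [x.2.2.1]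
        have := List.isChain_iff_getElem.mp hc i (by omega)
        exact this
      · exact x.1.2
      · have hlast := x.2.2.2.2
        rw [getLastD_eq_getElem] at hlast
        simp only [x.2.2.1] at hlast
        exact hlast⟩
  left_inv s := by
    refine Subtype.ext (funext fun i => ?_)
    show (s.1 ⟨0, Nat.succ_pos m⟩ :: List.ofFn fun j : Fin m => s.1 j.succ)[i.1]'_ = s.1 i
    have he : (s.1 ⟨0, Nat.succ_pos m⟩ :: List.ofFn fun j : Fin m => s.1 j.succ)
        = List.ofFn s.1 := (List.ofFn_succ (f := s.1)).symm
    simp only [he, List.getElem_ofFn]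
  right_inv x := by
    obtain ⟨⟨a, ha⟩, ⟨l, hlen, hch, hlast⟩⟩ := x
    refine Sigma.ext rfl (heq_of_eq (Subtype.ext ?_))
    show (List.ofFn fun i : Fin m => (a :: l)[i.succ.1]'(by simp [hlen])) = l
    refine List.ext_getElem (by simp [hlen]) fun i h1 h2 => ?_
    simp [List.getElem_ofFn]

end Top

lemma card_sigma_TS (m : ℕ) :
    Nat.card (Σ a : {a : Fin 3 // a ≠ 2}, TS m a) = gcount m 0 + gcount m 1 := by
  classical
  rw [nat_card_sigma]
  simp only [card_TS]
  rw [(Finset.sum_subtype (Finset.filter (fun a : Fin 3 => a ≠ 2) Finset.univ)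
    (by simp) (gcount m)).symm]
  rw [show Finset.filter (fun a : Fin 3 => a ≠ 2) Finset.univ = {0, 1} from by decide]
  rw [Finset.sum_insert (by decide), Finset.sum_singleton]

/-- The number of EVEN colored compositions of `k` equals the number of ternary strings
of length `k` in which every 0 is immediately followed (if anything) by a 0 or a 2,
every 1 is immediately followed (if anything) by a 1 or a 0, which do not begin with
a 2 and do not end with a 0. -/
theorem evenColoredCount_eq_ternary (k : ℕ) (hk : 0 < k) :
    evenColoredCount k =
      Nat.card {f : Fin k → Fin 3 //
        (∀ (i : ℕ) (h : i + 1 < k),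
          (f ⟨i, Nat.lt_of_succ_lt h⟩ = 0 → f ⟨i + 1, h⟩ = 0 ∨ f ⟨i + 1, h⟩ = 2) ∧
          (f ⟨i, Nat.lt_of_succ_lt h⟩ = 1 → f ⟨i + 1, h⟩ = 1 ∨ f ⟨i + 1, h⟩ = 0)) ∧
        f ⟨0, hk⟩ ≠ 2 ∧
        f ⟨k - 1, Nat.sub_lt hk Nat.one_pos⟩ ≠ 0} := by
  obtain ⟨m, rfl⟩ : ∃ m, k = m + 1 := ⟨k - 1, by omega⟩
  have h1 : evenColoredCount (m+1) = gcount m 0 + gcount m 1 := by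
    rw [evenColoredCount_eq_SA, (bridge m).1]
  have h2 := Nat.card_congr (topEquiv m)
  rw [card_sigma_TS] at h2
  rw [h1, ← h2]
end

section
/- The sequence o(ℓ), the number of ODD colored compositions of ℓ, satisfies o(1) = 1, o(2) = 3, o(3) = 7, and o(n) = 3·o(n−1) − 2·o(n−2) + o(n−3) for all n ≥ 4. -/
/-- The number of ODD colored compositions of `ℓ`: compositions where each part
in an odd position `i` (positions counted from 1) gets a color in `{1, …, pᵢ}`,
i.e. `∑` over compositions of `∏` of the parts in odd positions. -/
def oddColoredCount (ℓ : ℕ) : ℕ :=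
  ∑ c : Composition ℓ, ∏ i ∈ Finset.range c.blocks.length,
    if (i + 1) % 2 = 1 then c.blocks.getD i 1 else 1

/-- Weight of odd-position parts (0-indexed even positions). -/
def oddW (l : List ℕ) : ℕ :=
  ∏ i ∈ Finset.range l.length, if i % 2 = 0 then l.getD i 1 else 1

/-- Weight of even-position parts. -/
def evenW (l : List ℕ) : ℕ :=
  ∏ i ∈ Finset.range l.length, if i % 2 = 1 then l.getD i 1 else 1

theorem oddW_nil : oddW [] = 1 := rfl
theorem evenW_nil : evenW [] = 1 := rfl

theorem oddW_cons (p : ℕ) (l : List ℕ) : oddW (p :: l) = p * evenW l := by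
  unfold oddW evenW
  rw [List.length_cons, Finset.prod_range_succ']
  simp [Nat.succ_mod_two_eq_zero_iff, mul_comm]

theorem evenW_cons (p : ℕ) (l : List ℕ) : evenW (p :: l) = oddW l := by
  unfold oddW evenW
  rw [List.length_cons, Finset.prod_range_succ']
  simp [Nat.succ_mod_two_eq_one_iff]

/-- Finset of compositions of `n` as lists. -/
def CL : ℕ → Finset (List ℕ)
  | 0 => {[]}
  | n + 1 => Finset.univ.biUnion fun k : Fin (n + 1) =>
      (CL k).image (List.cons (n + 1 - k))
  decreasing_by exact k.isLt

theorem mem_CL : ∀ n (l : List ℕ), l ∈ CL n ↔ l.sum = n ∧ ∀ x ∈ l, 0 < x := by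
  intro n
  induction n using Nat.strong_induction_on with
  | _ n ih =>
    intro l
    match n with
    | 0 =>
      simp only [CL, Finset.mem_singleton]
      constructor
      · rintro rfl; simp
      · rintro ⟨hs, hp⟩
        cases l with
        | nil => rfl
        | cons a t =>
          have ha := hp a (by simp)
          simp only [List.sum_cons] at hs
          omega
    | n + 1 =>
      simp only [CL, Finset.mem_biUnion, Finset.mem_univ, Finset.mem_image, true_and]
      constructor
      · rintro ⟨k, t, ht, rfl⟩
        obtain ⟨hts, htp⟩ := (ih k k.isLt t).mp ht
        refine ⟨by simp [hts], ?_⟩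
        intro x hx
        rcases List.mem_cons.mp hx with rfl | hx
        · have := k.isLt; omega
        · exact htp x hx
      · rintro ⟨hs, hp⟩
        cases l with
        | nil => simp at hs
        | cons p t =>
          have hppos : 0 < p := hp p (by simp)
          simp only [List.sum_cons] at hs
          have hk : t.sum < n + 1 := by omega
          refine ⟨⟨t.sum, hk⟩, t, (ih t.sum hk t).mpr ⟨rfl, fun x hx => hp x (by simp [hx])⟩, ?_⟩
          simp; omega

/-- odd-start weighted count. -/
def Gs (n : ℕ) : ℕ := ∑ l ∈ CL n, oddW l
/-- even-start weighted count. -/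
def Hs (n : ℕ) : ℕ := ∑ l ∈ CL n, evenW l

theorem Gs_zero : Gs 0 = 1 := by simp [Gs, CL]; rfl
theorem Hs_zero : Hs 0 = 1 := by simp [Hs, CL]; rfl

theorem CL_disj (n : ℕ) : (↑(Finset.univ : Finset (Fin (n+1))) : Set (Fin (n+1))).PairwiseDisjoint
    (fun k : Fin (n+1) => (CL k).image (List.cons (n + 1 - k))) := by
  intro k _ k' _ hkk'
  refine Finset.disjoint_left.mpr ?_
  rintro l hl hl'
  simp only [Finset.mem_image] at hl hl'
  obtain ⟨t, _, rfl⟩ := hl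
  obtain ⟨t', _, h⟩ := hl'
  apply hkk'
  have h1 := congrArg (fun l => List.headI l) h
  simp at h1
  have := k.isLt; have := k'.isLt
  exact (Fin.ext (by omega)).symm

theorem Gs_succ (n : ℕ) : Gs (n + 1) = ∑ k ∈ Finset.range (n + 1), (n + 1 - k) * Hs k := by
  rw [← Fin.sum_univ_eq_sum_range]
  unfold Gs
  rw [show CL (n+1) = Finset.univ.biUnion fun k : Fin (n + 1) =>
      (CL k).image (List.cons (n + 1 - k)) from by rw [CL]]
  rw [Finset.sum_biUnion (CL_disj n)]
  refine Finset.sum_congr rfl fun k _ => ?_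
  rw [Finset.sum_image (fun a _ b _ h => (List.cons.injEq _ _ _ _).mp h |>.2)]
  simp only [oddW_cons, Hs, Finset.mul_sum]

theorem Hs_succ (n : ℕ) : Hs (n + 1) = ∑ k ∈ Finset.range (n + 1), Gs k := by
  rw [← Fin.sum_univ_eq_sum_range]
  unfold Hs
  rw [show CL (n+1) = Finset.univ.biUnion fun k : Fin (n + 1) =>
      (CL k).image (List.cons (n + 1 - k)) from by rw [CL]]
  rw [Finset.sum_biUnion (CL_disj n)]
  refine Finset.sum_congr rfl fun k _ => ?_
  rw [Finset.sum_image (fun a _ b _ h => (List.cons.injEq _ _ _ _).mp h |>.2)]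
  exact Finset.sum_congr rfl fun t _ => evenW_cons _ _

theorem occ_eq (n : ℕ) : oddColoredCount n = Gs n := by
  unfold oddColoredCount Gs
  simp only [Nat.succ_mod_two_eq_one_iff]
  refine Finset.sum_bij' (fun c _ => c.blocks)
    (fun l hl => ⟨l, fun {i} hi => ((mem_CL n l).mp hl).2 i hi, ((mem_CL n l).mp hl).1⟩)
    ?_ ?_ ?_ ?_ ?_
  · intro c _
    exact (mem_CL n c.blocks).mpr ⟨c.blocks_sum, fun x hx => c.blocks_pos hx⟩
  · intro l hl; exact Finset.mem_univ _
  · intro c _; rfl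
  · intro l hl; rfl
  · intro c _; rfl

theorem Hs_step (m : ℕ) : Hs (m + 2) = Hs (m + 1) + Gs (m + 1) := by
  rw [Hs_succ, Hs_succ, Finset.sum_range_succ]

theorem Gs_step (m : ℕ) :
    Gs (m + 2) = Gs (m + 1) + ∑ k ∈ Finset.range (m + 2), Hs k := by
  rw [Gs_succ, Gs_succ]
  have h1 : ∑ k ∈ Finset.range (m + 2), (m + 2 - k) * Hs k
      = ∑ k ∈ Finset.range (m + 2), ((m + 1 - k) * Hs k + Hs k) := by
    refine Finset.sum_congr rfl fun k hk => ?_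
    have hk' : k < m + 2 := Finset.mem_range.mp hk
    have he : m + 2 - k = (m + 1 - k) + 1 := by omega
    rw [he, add_mul, one_mul]
  rw [h1, Finset.sum_add_distrib, Finset.sum_range_succ (fun k => (m + 1 - k) * Hs k)]
  simp

theorem Gs_one : Gs 1 = 1 := by
  rw [Gs_succ]; simp [Hs_zero]

theorem Hs_one : Hs 1 = 1 := by
  rw [Hs_succ]; simp [Gs_zero]

theorem Hs_two : Hs 2 = 2 := by
  rw [Hs_succ]; simp [Finset.sum_range_succ, Gs_zero, Gs_one]

theorem Gs_two : Gs 2 = 3 := by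
  rw [Gs_succ]; simp [Finset.sum_range_succ, Hs_zero, Hs_one]

theorem Gs_three : Gs 3 = 7 := by
  rw [Gs_succ]; simp [Finset.sum_range_succ, Hs_zero, Hs_one, Hs_two]

/-- `o(1) = 1`, `o(2) = 3`, `o(3) = 7`, and `o(n) = 3o(n-1) - 2o(n-2) + o(n-3)`
for all `n ≥ 4` (stated in `ℤ` so that subtraction is honest). -/
theorem oddColoredCount_recurrence :
    oddColoredCount 1 = 1 ∧ oddColoredCount 2 = 3 ∧ oddColoredCount 3 = 7 ∧
    ∀ n : ℕ, 4 ≤ n →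
      (oddColoredCount n : ℤ) =
        3 * oddColoredCount (n - 1) - 2 * oddColoredCount (n - 2)
          + oddColoredCount (n - 3) := by
  refine ⟨by rw [occ_eq, Gs_one], by rw [occ_eq, Gs_two], by rw [occ_eq, Gs_three], ?_⟩
  intro n hn
  obtain ⟨m, rfl⟩ : ∃ m, n = m + 4 := ⟨n - 4, by omega⟩
  have e1 : m + 4 - 1 = m + 3 := by omega
  have e2 : m + 4 - 2 = m + 2 := by omega
  have e3 : m + 4 - 3 = m + 1 := by omega
  rw [e1, e2, e3, occ_eq, occ_eq, occ_eq, occ_eq]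
  have f1 : Gs (m + 4) = Gs (m + 3) + ∑ k ∈ Finset.range (m + 4), Hs k := Gs_step (m + 2)
  have f2 : Gs (m + 3) = Gs (m + 2) + ∑ k ∈ Finset.range (m + 3), Hs k := Gs_step (m + 1)
  have f3 : Gs (m + 2) = Gs (m + 1) + ∑ k ∈ Finset.range (m + 2), Hs k := Gs_step m
  have s1 : ∑ k ∈ Finset.range (m + 4), Hs k
      = (∑ k ∈ Finset.range (m + 3), Hs k) + Hs (m + 3) := Finset.sum_range_succ _ _
  have s2 : ∑ k ∈ Finset.range (m + 3), Hs k
      = (∑ k ∈ Finset.range (m + 2), Hs k) + Hs (m + 2) := Finset.sum_range_succ _ _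
  have f4 : Hs (m + 3) = Hs (m + 2) + Gs (m + 2) := Hs_step (m + 1)
  omega
end

section
/- In the ring of formal power series ℤ[[X]], the generating function F_e(X) = Σ_{ℓ≥1} e(ℓ)·X^ℓ of the numbers e(ℓ) of EVEN colored compositions satisfies (1 − 3X + 2X² − X³)·F_e(X) = X − X² + X³. -/
open Finset

def ww : Bool → List ℕ → ℕ
  | _, [] => 1
  | b, p :: L => (if b then p else 1) * ww (!b) L

def comps : ℕ → Finset (List ℕ)
  | 0 => {[]}
  | n + 1 => (Finset.range (n+1)).attach.biUnion
      fun k => (comps k.1).image (fun L => (n + 1 - k.1) :: L)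
decreasing_by exact Finset.mem_range.mp k.2

lemma mem_comps : ∀ n L, L ∈ comps n ↔ L.sum = n ∧ ∀ x ∈ L, 0 < x := by
  intro n
  induction n using Nat.strong_induction_on with
  | _ n ih =>
    match n with
    | 0 =>
      intro L
      simp only [comps, Finset.mem_singleton]
      constructor
      · rintro rfl; simp
      · rintro ⟨h1, h2⟩
        cases L with
        | nil => rfl
        | cons p L =>
          exfalso
          have := h2 p (by simp)
          simp [List.sum_cons] at h1
          omega
    | n + 1 =>
      intro L
      simp only [comps, Finset.mem_biUnion, Finset.mem_image, Finset.mem_attach,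
        true_and, exists_prop]
      constructor
      · rintro ⟨⟨k, hk⟩, L', hL', rfl⟩
        have hk' := Finset.mem_range.mp hk
        have hL'' : L' ∈ comps k := hL'
        obtain ⟨hs, hp⟩ := (ih k (by omega) L').mp hL''
        constructor
        · show n + 1 - k + L'.sum = n + 1
          omega
        · intro x hx
          rcases List.mem_cons.mp hx with h | hx
          · have : x = n + 1 - k := h
            omega
          · exact hp x hx
      · rintro ⟨h1, h2⟩
        cases L with
        | nil => simp at h1
        | cons p L' =>
          have hp : 0 < p := h2 p (by simp)
          simp [List.sum_cons] at h1
          have hk : L'.sum < n + 1 := by omega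
          refine ⟨⟨L'.sum, Finset.mem_range.mpr hk⟩, L', ?_, ?_⟩
          · exact (ih L'.sum (by omega) L').mpr ⟨rfl, fun x hx => h2 x (by simp [hx])⟩
          · show (n + 1 - L'.sum) :: L' = p :: L'
            have : n + 1 - L'.sum = p := by omega
            rw [this]

def ff (n : ℕ) : ℕ := ∑ L ∈ comps n, ww false L
def gg (n : ℕ) : ℕ := ∑ L ∈ comps n, ww true L

lemma sum_comps_succ (n : ℕ) (wt : List ℕ → ℕ) :
    ∑ L ∈ comps (n+1), wt L
      = ∑ k ∈ Finset.range (n+1), ∑ L ∈ comps k, wt ((n + 1 - k) :: L) := by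
  conv_lhs => rw [comps]
  rw [Finset.sum_biUnion]
  · rw [← Finset.sum_attach (Finset.range (n+1))
      (fun k => ∑ L ∈ comps k, wt ((n + 1 - k) :: L))]
    refine Finset.sum_congr rfl fun k _ => ?_
    rw [Finset.sum_image]
    intro a _ b _ h
    exact List.tail_eq_of_cons_eq h
  · intro a _ b _ hab
    simp only [Function.onFun]
    rw [Finset.disjoint_left]
    rintro L hLa hLb
    simp only [Finset.mem_image] at hLa hLb
    obtain ⟨La, -, rfl⟩ := hLa
    obtain ⟨Lb, -, hb⟩ := hLb
    have ha' := Finset.mem_range.mp a.2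
    have hb' := Finset.mem_range.mp b.2
    have : n + 1 - b.1 = n + 1 - a.1 := List.head_eq_of_cons_eq hb
    exact hab (Subtype.ext (by omega))

lemma ff_succ (n : ℕ) : ff (n+1) = ∑ k ∈ Finset.range (n+1), gg k := by
  unfold ff gg
  rw [sum_comps_succ]
  refine Finset.sum_congr rfl fun k hk => Finset.sum_congr rfl fun L _ => ?_
  have hk' := Finset.mem_range.mp hk
  have h1 : 0 < n + 1 - k := by omega
  simp [ww]

lemma gg_succ (n : ℕ) : gg (n+1) = ∑ k ∈ Finset.range (n+1), (n + 1 - k) * ff k := by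
  unfold ff gg
  rw [sum_comps_succ]
  refine Finset.sum_congr rfl fun k _ => ?_
  rw [Finset.mul_sum]
  refine Finset.sum_congr rfl fun L _ => ?_
  simp [ww]

lemma ff_zero : ff 0 = 1 := by simp [ff, comps, ww]
lemma gg_zero : gg 0 = 1 := by simp [gg, comps, ww]

lemma ff_step (n : ℕ) (hn : 1 ≤ n) : ff (n+1) = ff n + gg n := by
  obtain ⟨m, rfl⟩ : ∃ m, n = m + 1 := ⟨n - 1, by omega⟩
  rw [ff_succ (m+1), Finset.sum_range_succ, ← ff_succ m]

def hh (n : ℕ) : ℕ := ∑ k ∈ Finset.range (n+1), ff k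

lemma gg_step (n : ℕ) (hn : 1 ≤ n) : gg (n+1) = gg n + hh n := by
  obtain ⟨m, rfl⟩ : ∃ m, n = m + 1 := ⟨n - 1, by omega⟩
  rw [gg_succ (m+1), gg_succ m, hh]
  have key : ∀ k ∈ Finset.range (m+2), (m + 1 + 1 - k) * ff k
      = (m + 1 - k) * ff k + ff k := by
    intro k hk
    have := Finset.mem_range.mp hk
    have h : m + 1 + 1 - k = (m + 1 - k) + 1 := by omega
    rw [h, add_mul, one_mul]
  rw [Finset.sum_congr rfl key, Finset.sum_add_distrib]
  congr 1
  rw [Finset.sum_range_succ]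
  simp

lemma hh_step (n : ℕ) : hh (n+1) = hh n + ff (n+1) := by
  simp [hh, Finset.sum_range_succ]

lemma ff_rec (n : ℕ) (hn : 1 ≤ n) :
    (ff (n+3) : ℤ) = 3 * ff (n+2) - 2 * ff (n+1) + ff n := by
  have e1 := ff_step n hn
  have e2 := ff_step (n+1) (by omega)
  have e3 := ff_step (n+2) (by omega)
  have g1 := gg_step n hn
  have g2 := gg_step (n+1) (by omega)
  have h1 := hh_step n
  zify at e1 e2 e3 g1 g2 h1
  linarith

lemma ff_one : ff 1 = 1 := by simp [ff_succ, gg_zero]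
lemma gg_one : gg 1 = 1 := by simp [gg_succ, ff_zero]
lemma ff_two : ff 2 = 2 := by rw [ff_step 1 le_rfl, ff_one, gg_one]
lemma gg_two : gg 2 = 3 := by
  rw [gg_step 1 le_rfl, gg_one, hh]
  simp [Finset.sum_range_succ, ff_zero, ff_one]
lemma ff_three : ff 3 = 5 := by rw [ff_step 2 (by omega), ff_two, gg_two]


lemma prod_eq_ww : ∀ (L : List ℕ) (s : ℕ),
    (∏ i ∈ Finset.range L.length, if (i + s) % 2 = 0 then L.getD i 1 else 1)
      = ww (decide (s % 2 = 0)) L := by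
  intro L
  induction L with
  | nil => intro s; simp [ww]
  | cons p L ih =>
    intro s
    rw [List.length_cons, Finset.prod_range_succ']
    have hD : ∀ i, ((p :: L).getD (i+1) 1) = L.getD i 1 := fun i => rfl
    simp only [hD]
    have h2 : ∀ i : ℕ, (i + 1 + s) = i + (s+1) := fun i => by ring
    simp only [h2]
    rw [ih (s+1)]
    show ww (decide ((s+1) % 2 = 0)) L * (if (0 + s) % 2 = 0 then (p::L).getD 0 1 else 1)
      = ww (decide (s % 2 = 0)) (p :: L)
    rcases Nat.even_or_odd s with hs | hs
    · have e1 : s % 2 = 0 := Nat.even_iff.mp hs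
      have e2 : (s+1) % 2 = 1 := by omega
      simp [ww, e1, e2, mul_comm]
    · have e1 : s % 2 = 1 := Nat.odd_iff.mp hs
      have e2 : (s+1) % 2 = 0 := by omega
      simp [ww, e1, e2, mul_comm]

lemma ecc_eq_ff (n : ℕ) : evenColoredCount n = ff n := by
  unfold evenColoredCount ff
  rw [← Finset.sum_attach (comps n) (fun L => ww false L)]
  refine Finset.sum_nbij' (i := fun c => (⟨c.blocks, (mem_comps n c.blocks).mpr
      ⟨c.blocks_sum, fun x hx => c.blocks_pos hx⟩⟩ : {L // L ∈ comps n}))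
    (j := fun L => ⟨L.1, fun hx => ((mem_comps n L.1).mp L.2).2 _ hx,
      ((mem_comps n L.1).mp L.2).1⟩) ?_ ?_ ?_ ?_ ?_
  · intro c _; exact Finset.mem_attach _ _
  · intro L _; exact Finset.mem_univ _
  · intro c _; rfl
  · intro L _; rfl
  · intro c _
    have := prod_eq_ww c.blocks 1
    simpa using this


/-- The generating function `F_e(X) = ∑_{ℓ ≥ 1} e(ℓ) Xᶫ ∈ ℤ[[X]]` of the numbers of
EVEN colored compositions; its constant coefficient is `0`. -/
def Fe : PowerSeries ℤ :=
  PowerSeries.mk fun ℓ => if ℓ = 0 then 0 else (evenColoredCount ℓ : ℤ)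

def EE : ℕ → ℤ := fun n => if n = 0 then 0 else (ff n : ℤ)

/-- `(1 - 3X + 2X² - X³) · F_e(X) = X - X² + X³` in `ℤ[[X]]`. -/
theorem Fe_generating_function :
    (1 - 3 * PowerSeries.X + 2 * PowerSeries.X ^ 2 - PowerSeries.X ^ 3) * Fe =
      PowerSeries.X - PowerSeries.X ^ 2 + PowerSeries.X ^ 3 := by
  have hFe : ∀ n, PowerSeries.coeff n Fe = EE n := by
    intro n; simp [Fe, EE, ecc_eq_ff]
  have key : (1 - 3 * PowerSeries.X + 2 * PowerSeries.X ^ 2 - PowerSeries.X ^ 3) * Fe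
      = Fe - (Fe * PowerSeries.X ^ 1) * PowerSeries.C (R := ℤ) 3
        + (Fe * PowerSeries.X ^ 2) * PowerSeries.C (R := ℤ) 2 - Fe * PowerSeries.X ^ 3 := by
    have h3 : (PowerSeries.C (R := ℤ) 3) = 3 := by norm_num
    have h2 : (PowerSeries.C (R := ℤ) 2) = 2 := by norm_num
    rw [h3, h2]; ring
  rw [key]
  ext n
  simp only [map_sub, map_add, PowerSeries.coeff_mul_C, PowerSeries.coeff_mul_X_pow', hFe,
    PowerSeries.coeff_X, PowerSeries.coeff_X_pow]
  match n with
  | 0 => norm_num [EE]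
  | 1 => norm_num [EE, ff_one]
  | 2 => norm_num [EE, ff_one, ff_two]
  | 3 => norm_num [EE, ff_one, ff_two, ff_three]
  | (m+4) =>
    have hrec := ff_rec (m+1) (by omega)
    have h1 : (1:ℕ) ≤ m + 4 := by omega
    have h2 : (2:ℕ) ≤ m + 4 := by omega
    have h3 : (3:ℕ) ≤ m + 4 := by omega
    have e1 : m + 4 - 1 = m + 3 := by omega
    have e2 : m + 4 - 2 = m + 2 := by omega
    have e3 : m + 4 - 3 = m + 1 := by omega
    rw [if_pos h1, if_pos h2, if_pos h3, e1, e2, e3,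
      if_neg (by omega : ¬ m + 4 = 1), if_neg (by omega : ¬ m + 4 = 2),
      if_neg (by omega : ¬ m + 4 = 3)]
    simp only [EE, if_neg (by omega : ¬ m + 4 = 0), if_neg (by omega : ¬ m + 3 = 0),
      if_neg (by omega : ¬ m + 2 = 0), if_neg (by omega : ¬ m + 1 = 0)]
    have : m + 1 + 3 = m + 4 := by omega
    rw [this] at hrec
    linarith
end

section
/- Let m ≥ 2 and let k be an integer with 1 ≤ k ≤ m. In the ring of formal power series ℤ[[X]], the generating function F_{m,k}(X) = Σ_{ℓ≥1} c_{m,k}(ℓ)·X^ℓ of the numbers c_{m,k}(ℓ) of (m,k)-n-colored compositions satisfies ((1−X)^{m+1} − X^m)·F_{m,k}(X) = X^m + Σ_{j=1}^{k−1} X^j·(1−X)^{m−j+1} + Σ_{t=k}^{m−1} X^t·(1−X)^{m−t}. -/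
/-- The number of `(m,k)`-`n`-colored compositions of `ℓ`: compositions where each part
whose position `i` (positions counted from 1) satisfies `i ≡ k (mod m)` gets a color in
`{1, …, pᵢ}`, i.e. `∑` over compositions of `∏` of the parts in positions `≡ k (mod m)`. -/
def mkColoredCount (m k ℓ : ℕ) : ℕ :=
  ∑ c : Composition ℓ, ∏ i ∈ Finset.range c.blocks.length,
    if (i + 1) % m = k % m then c.blocks.getD i 1 else 1

/-- The generating function `F_{m,k}(X) = ∑_{ℓ ≥ 1} c_{m,k}(ℓ) Xᶫ ∈ ℤ[[X]]` of the
numbers of `(m,k)`-`n`-colored compositions; its constant coefficient is `0`. -/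
def Fmk (m k : ℕ) : PowerSeries ℤ :=
  PowerSeries.mk fun ℓ => if ℓ = 0 then 0 else (mkColoredCount m k ℓ : ℤ)

lemma mod_succ_iff {m : ℕ} (hm : 0 < m) (a b : ℕ) :
    (a + 1) % m = (b + 1) % m ↔ a % m = b % m := by
  rcases eq_or_lt_of_le (show 1 ≤ m from hm) with h1 | hm2
  · simp [← h1, Nat.mod_one]
  constructor
  · intro h
    have ha : a % m < m := Nat.mod_lt _ hm
    have hb : b % m < m := Nat.mod_lt _ hm
    rw [Nat.add_mod a, Nat.add_mod b, Nat.mod_eq_of_lt hm2] at h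
    have e1 : (a % m + 1) % m = if a % m + 1 = m then 0 else a % m + 1 := by
      rcases eq_or_lt_of_le (show a % m + 1 ≤ m by omega) with h2 | h2
      · simp [h2, Nat.mod_self]
      · rw [Nat.mod_eq_of_lt h2, if_neg (by omega)]
    have e2 : (b % m + 1) % m = if b % m + 1 = m then 0 else b % m + 1 := by
      rcases eq_or_lt_of_le (show b % m + 1 ≤ m by omega) with h2 | h2
      · simp [h2, Nat.mod_self]
      · rw [Nat.mod_eq_of_lt h2, if_neg (by omega)]
    rw [e1, e2] at h
    split_ifs at h <;> omega
  · intro h; rw [Nat.add_mod a, Nat.add_mod b, h]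

def consComp {ℓ : ℕ} (p : ℕ) (c : Composition (ℓ - p)) (h1 : 0 < p) (h2 : p ≤ ℓ) :
    Composition ℓ where
  blocks := p :: c.blocks
  blocks_pos := by
    intro i hi
    rcases List.mem_cons.1 hi with h | h
    · exact h ▸ h1
    · exact c.blocks_pos h
  blocks_sum := by
    have := c.blocks_sum
    simp only [List.sum_cons, this]
    omega

lemma tail_sum {ℓ : ℕ} (c : Composition ℓ) : c.blocks.tail.sum = ℓ - c.blocks.headI := by
  have h := c.blocks_sum
  cases hb : c.blocks with
  | nil => rw [hb] at h; simp at h ⊢; omega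
  | cons a l => rw [hb] at h; simp [List.sum_cons] at h ⊢; omega

def tailComp {ℓ : ℕ} (c : Composition ℓ) : Composition (ℓ - c.blocks.headI) where
  blocks := c.blocks.tail
  blocks_pos := fun hi => c.blocks_pos (List.mem_of_mem_tail hi)
  blocks_sum := tail_sum c

lemma blocks_ne_nil {ℓ : ℕ} (hℓ : 0 < ℓ) (c : Composition ℓ) : c.blocks ≠ [] := by
  intro h
  have := c.blocks_sum
  rw [h] at this
  simp at this
  omega

lemma headI_mem_Icc {ℓ : ℕ} (hℓ : 0 < ℓ) (c : Composition ℓ) :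
    c.blocks.headI ∈ Finset.Icc 1 ℓ := by
  have hne := blocks_ne_nil hℓ c
  have hsum := c.blocks_sum
  cases hb : c.blocks with
  | nil => exact absurd hb hne
  | cons a l =>
    have ha : 0 < a := c.blocks_pos (by rw [hb]; exact List.mem_cons_self)
    rw [hb] at hsum
    simp [List.sum_cons] at hsum
    simp [hb, Finset.mem_Icc]
    omega

lemma sum_comp_cons {M : Type*} [AddCommMonoid M] (ℓ : ℕ) (hℓ : 0 < ℓ) (F : List ℕ → M) :
    ∑ c : Composition ℓ, F c.blocks
      = ∑ p ∈ Finset.Icc 1 ℓ, ∑ c : Composition (ℓ - p), F (p :: c.blocks) := by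
  classical
  rw [← Finset.sum_sigma (Finset.Icc 1 ℓ)
    (fun p => (Finset.univ : Finset (Composition (ℓ - p))))
    (fun x => F (x.1 :: x.2.blocks))]
  refine Finset.sum_nbij' (fun c => ⟨c.blocks.headI, tailComp c⟩)
    (fun x => if h : 0 < x.1 ∧ x.1 ≤ ℓ then consComp x.1 x.2 h.1 h.2 else Composition.ones ℓ)
    ?_ ?_ ?_ ?_ ?_
  · intro c _
    rw [Finset.mem_sigma]
    exact ⟨headI_mem_Icc hℓ c, Finset.mem_univ _⟩
  · intro x _
    exact Finset.mem_univ _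
  · intro c _
    have h := headI_mem_Icc hℓ c
    rw [Finset.mem_Icc] at h
    beta_reduce
    rw [dif_pos (show 0 < c.blocks.headI ∧ c.blocks.headI ≤ ℓ from ⟨h.1, h.2⟩)]
    apply Composition.ext
    show c.blocks.headI :: c.blocks.tail = c.blocks
    cases hb : c.blocks with
    | nil => exact absurd hb (blocks_ne_nil hℓ c)
    | cons a l => simp
  · rintro ⟨p, c⟩ hx
    rw [Finset.mem_sigma, Finset.mem_Icc] at hx
    beta_reduce
    rw [dif_pos (show 0 < p ∧ p ≤ ℓ from ⟨hx.1.1, hx.1.2⟩)]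
    show (⟨p, tailComp (consComp p c hx.1.1 hx.1.2)⟩ : Σ p : ℕ, Composition (ℓ - p)) = ⟨p, c⟩
    have : tailComp (consComp p c hx.1.1 hx.1.2) = c := by
      apply Composition.ext
      rfl
    rw [this]
  · intro c _
    show F c.blocks = F (c.blocks.headI :: (tailComp c).blocks)
    congr 1
    show c.blocks = c.blocks.headI :: c.blocks.tail
    cases hb : c.blocks with
    | nil => exact absurd hb (blocks_ne_nil hℓ c)
    | cons a l => simp

lemma mkCC_zero (m k : ℕ) : mkColoredCount m k 0 = 1 := by
  unfold mkColoredCount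
  have h : ∀ c : Composition 0, c.blocks = [] := by
    intro c
    have hs := c.blocks_sum
    cases hb : c.blocks with
    | nil => rfl
    | cons a l =>
      have ha : 0 < a := c.blocks_pos (by rw [hb]; exact List.mem_cons_self)
      rw [hb] at hs
      simp [List.sum_cons] at hs
      omega
  have hcard : Fintype.card (Composition 0) = 1 := by
    rw [Fintype.card_eq_one_iff]
    refine ⟨Composition.ones 0, fun c => ?_⟩
    apply Composition.ext
    rw [h c]
    rfl
  have he : ∀ c : Composition 0, (∏ i ∈ Finset.range c.blocks.length,
      if (i + 1) % m = k % m then c.blocks.getD i 1 else 1) = 1 := by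
    intro c
    rw [h c]
    simp
  rw [Finset.sum_congr rfl (fun c _ => he c)]
  simp [hcard]

lemma mkCC_congr (m k k' ℓ : ℕ) (h : k % m = k' % m) :
    mkColoredCount m k ℓ = mkColoredCount m k' ℓ := by
  unfold mkColoredCount
  simp only [h]

lemma Fmk_congr (m k k' : ℕ) (h : k % m = k' % m) : Fmk m k = Fmk m k' := by
  apply PowerSeries.ext
  intro n
  simp only [Fmk, PowerSeries.coeff_mk]
  rw [mkCC_congr m k k' n h]

lemma mkCC_cons (m k ℓ : ℕ) (hm : 0 < m) (hℓ : 0 < ℓ) :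
    mkColoredCount m k ℓ
      = ∑ p ∈ Finset.Icc 1 ℓ, (if 1 % m = k % m then p else 1)
          * mkColoredCount m (k + m - 1) (ℓ - p) := by
  unfold mkColoredCount
  rw [sum_comp_cons ℓ hℓ (fun l => ∏ i ∈ Finset.range l.length,
      if (i + 1) % m = k % m then l.getD i 1 else 1)]
  refine Finset.sum_congr rfl (fun p hp => ?_)
  rw [Finset.mul_sum]
  refine Finset.sum_congr rfl (fun c _ => ?_)
  show (∏ i ∈ Finset.range (p :: c.blocks).length,
      if (i + 1) % m = k % m then (p :: c.blocks).getD i 1 else 1) = _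
  have hlen : (p :: c.blocks).length = c.blocks.length + 1 := rfl
  rw [hlen, Finset.prod_range_succ']
  have h0 : (if (0 + 1) % m = k % m then (p :: c.blocks).getD 0 1 else 1)
      = (if 1 % m = k % m then p else 1) := by
    simp
  rw [h0, mul_comm]
  congr 1
  refine Finset.prod_congr rfl (fun i _ => ?_)
  have hcond : ((i + 1) + 1) % m = k % m ↔ (i + 1) % m = (k + m - 1) % m := by
    have h1 : (k + m - 1) + 1 = k + m := by omega
    rw [← Nat.add_mod_right k m]
    conv_lhs => rw [show k + m = (k + m - 1) + 1 from h1.symm]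
    exact mod_succ_iff hm (i + 1) (k + m - 1)
  rw [show (i + 1 + 1) % m = ((i + 1) + 1) % m from rfl]
  simp only [hcond]
  rfl

lemma coeff_G (m k q : ℕ) :
    (PowerSeries.coeff q) (1 + Fmk m k) = (mkColoredCount m k q : ℤ) := by
  cases q with
  | zero => simp [Fmk, mkCC_zero, PowerSeries.coeff_zero_eq_constantCoeff]
  | succ q => simp [Fmk, PowerSeries.coeff_one]

lemma Fmk_key (m k : ℕ) (hm : 0 < m) :
    Fmk m k = (PowerSeries.mk fun p =>
        if 1 % m = k % m then (p : ℤ) else if p = 0 then 0 else 1)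
      * (1 + Fmk m (k + m - 1)) := by
  apply PowerSeries.ext
  intro n
  rw [PowerSeries.coeff_mul, Finset.Nat.sum_antidiagonal_eq_sum_range_succ_mk]
  cases n with
  | zero => simp [Fmk, PowerSeries.coeff_mk]
  | succ n =>
    have hnat : (mkColoredCount m k (n + 1) : ℤ)
        = ∑ i ∈ Finset.range (n + 1),
            (if 1 % m = k % m then (i + 1 : ℤ) else 1)
              * (mkColoredCount m (k + m - 1) (n - i) : ℤ) := by
      rw [mkCC_cons m k (n + 1) hm (Nat.succ_pos n)]
      rw [show Finset.Icc 1 (n + 1) = Finset.Ico 1 (n + 2) from by ext x; simp only [Finset.mem_Icc, Finset.mem_Ico]; omega]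
      rw [Finset.sum_Ico_eq_sum_range]
      push_cast
      refine Finset.sum_congr (by congr 1) (fun i hi => ?_)
      have h1 : n + 1 - (1 + i) = n - i := by omega
      rw [h1]
      congr 1
      split
      · ring
      · rfl
    rw [Finset.sum_range_succ']
    simp only [PowerSeries.coeff_mk, coeff_G]
    simp only [Nat.cast_zero, if_true, ite_self, zero_mul, add_zero]
    have hL : (PowerSeries.coeff (n + 1)) (Fmk m k) = (mkColoredCount m k (n + 1) : ℤ) := by
      simp [Fmk]
    rw [hL, hnat]
    refine Finset.sum_congr rfl (fun i hi => ?_)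
    have h2 : n + 1 - (i + 1) = n - i := by omega
    rw [h2]
    by_cases hc : 1 % m = k % m
    · simp only [if_pos hc]
      push_cast
      ring
    · simp [hc]

lemma one_sub_X_mul_Wu :
    (1 - PowerSeries.X) * PowerSeries.mk (fun p => if p = 0 then (0:ℤ) else 1)
      = PowerSeries.X := by
  apply PowerSeries.ext
  intro n
  rw [sub_mul, one_mul, map_sub]
  cases n with
  | zero =>
    simp [PowerSeries.coeff_mk, PowerSeries.coeff_zero_eq_constantCoeff]
  | succ n =>
    rw [PowerSeries.coeff_succ_X_mul]
    simp only [PowerSeries.coeff_mk, PowerSeries.coeff_X]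
    rw [if_neg (Nat.succ_ne_zero n)]
    rcases Nat.eq_zero_or_pos n with h | h
    · subst h; norm_num
    · rw [if_neg (by omega), if_neg (by omega : ¬ n + 1 = 1)]
      ring

lemma one_sub_X_mul_Wc :
    (1 - PowerSeries.X) * PowerSeries.mk (fun p => (p : ℤ))
      = PowerSeries.mk (fun p => if p = 0 then (0:ℤ) else 1) := by
  apply PowerSeries.ext
  intro n
  rw [sub_mul, one_mul, map_sub]
  cases n with
  | zero =>
    simp [PowerSeries.coeff_mk, PowerSeries.coeff_zero_eq_constantCoeff]
  | succ n =>
    rw [PowerSeries.coeff_succ_X_mul]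
    simp only [PowerSeries.coeff_mk]
    rw [if_neg (Nat.succ_ne_zero n)]
    push_cast
    ring

lemma one_sub_X_sq_mul_Wc :
    (1 - PowerSeries.X) ^ 2 * PowerSeries.mk (fun p => (p : ℤ)) = PowerSeries.X := by
  rw [sq, mul_assoc, one_sub_X_mul_Wc, one_sub_X_mul_Wu]

lemma recA (m k : ℕ) (hm : 2 ≤ m) (hk : 2 ≤ k) (hkm : k ≤ m) :
    (1 - PowerSeries.X) * Fmk m k = PowerSeries.X * (1 + Fmk m (k - 1)) := by
  have hne : 1 % m ≠ k % m := by
    have h1 : 1 % m = 1 := Nat.mod_eq_of_lt (by omega)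
    rcases eq_or_lt_of_le hkm with h | h
    · rw [h1, h, Nat.mod_self]; omega
    · rw [h1, Nat.mod_eq_of_lt h]; omega
  have hcongr : Fmk m (k + m - 1) = Fmk m (k - 1) := by
    apply Fmk_congr
    have : k + m - 1 = (k - 1) + m := by omega
    rw [this, Nat.add_mod_right]
  rw [Fmk_key m k (by omega)]
  simp only [if_neg hne]
  rw [hcongr, ← mul_assoc, one_sub_X_mul_Wu]

lemma recB (m : ℕ) (hm : 2 ≤ m) :
    (1 - PowerSeries.X) ^ 2 * Fmk m 1 = PowerSeries.X * (1 + Fmk m m) := by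
  rw [Fmk_key m 1 (by omega)]
  simp only [eq_self_iff_true, if_true]
  rw [show 1 + m - 1 = m by omega, ← mul_assoc, one_sub_X_sq_mul_Wc]

lemma sum_Icc_shift {M : Type*} [AddCommMonoid M] (f : ℕ → M) (a b : ℕ) :
    ∑ i ∈ Finset.Icc (a + 1) (b + 1), f i = ∑ i ∈ Finset.Icc a b, f (i + 1) := by
  rw [← Finset.map_add_right_Icc a b 1, Finset.sum_map]
  rfl

lemma sum_Icc_bot {M : Type*} [AddCommMonoid M] (f : ℕ → M) (a b : ℕ) (h : a ≤ b) :
    ∑ i ∈ Finset.Icc a b, f i = f a + ∑ i ∈ Finset.Icc (a + 1) b, f i := by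
  rw [show Finset.Icc a b = insert a (Finset.Icc (a + 1) b) from by
    ext x; simp only [Finset.mem_Icc, Finset.mem_insert]; omega]
  rw [Finset.sum_insert (by simp only [Finset.mem_Icc]; omega)]

noncomputable def Rmk (m k : ℕ) : PowerSeries ℤ :=
  PowerSeries.X ^ m
    + ∑ j ∈ Finset.Icc 1 (k - 1),
        PowerSeries.X ^ j * (1 - PowerSeries.X) ^ (m - j + 1)
    + ∑ t ∈ Finset.Icc k (m - 1),
        PowerSeries.X ^ t * (1 - PowerSeries.X) ^ (m - t)

lemma idA (m k : ℕ) (hm : 2 ≤ m) (hk1 : 1 ≤ k) (hk2 : k ≤ m - 1) :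
    (1 - PowerSeries.X) * Rmk m (k + 1)
      = PowerSeries.X * Rmk m k
          + PowerSeries.X * (1 - PowerSeries.X) ^ (m + 1) - PowerSeries.X ^ (m + 1) := by
  set X := PowerSeries.X (R := ℤ)
  set Y := 1 - X with hY
  unfold Rmk
  rw [show k + 1 - 1 = k by omega]
  -- e1 : Y * (sum over Icc 1 k) = X * Y^(m+1) + sum over Icc 1 (k-1) of X * (...)
  have e1 : Y * ∑ j ∈ Finset.Icc 1 k, X ^ j * Y ^ (m - j + 1)
      = X * Y ^ (m + 1) + ∑ j ∈ Finset.Icc 1 (k - 1), X * (X ^ j * Y ^ (m - j + 1)) := by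
    rw [Finset.mul_sum, sum_Icc_bot (fun j => Y * (X ^ j * Y ^ (m - j + 1))) 1 k hk1]
    congr 1
    · rw [show m - 1 + 1 = m by omega, pow_one]
      rw [show Y * (X * Y ^ m) = X * (Y ^ m * Y) by ring, ← pow_succ]
    · rw [show k = (k - 1) + 1 by omega, sum_Icc_shift
        (fun j => Y * (X ^ j * Y ^ (m - j + 1))) 1 (k - 1)]
      refine Finset.sum_congr rfl (fun j hj => ?_)
      simp only [Finset.mem_Icc] at hj
      rw [show m - (j + 1) + 1 = m - j by omega]
      rw [show m - j + 1 = (m - j) + 1 from rfl, pow_succ, pow_succ]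
      ring
  -- e2 : X * (sum over Icc k (m-1)) = Y * (sum over Icc (k+1) (m-1)) + X^m * Y
  have e2 : X * ∑ t ∈ Finset.Icc k (m - 1), X ^ t * Y ^ (m - t)
      = Y * (∑ t ∈ Finset.Icc (k + 1) (m - 1), X ^ t * Y ^ (m - t)) + X ^ m * Y := by
    have htop : ∑ t ∈ Finset.Icc (k + 1) m, Y * (X ^ t * Y ^ (m - t))
        = (∑ t ∈ Finset.Icc (k + 1) (m - 1), Y * (X ^ t * Y ^ (m - t))) + X ^ m * Y := by
      rw [show m = (m - 1) + 1 by omega]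
      rw [Finset.sum_Icc_succ_top (by omega)]
      rw [show (m - 1) + 1 - ((m - 1) + 1) = 0 by omega]
      rw [pow_zero, mul_one]
      simp only [Nat.add_sub_cancel]
      ring
    have hshift : ∑ t ∈ Finset.Icc (k + 1) m, Y * (X ^ t * Y ^ (m - t))
        = ∑ t ∈ Finset.Icc k (m - 1), Y * (X ^ (t + 1) * Y ^ (m - (t + 1))) := by
      rw [show m = (m - 1) + 1 by omega, sum_Icc_shift
        (fun t => Y * (X ^ t * Y ^ ((m - 1) + 1 - t))) k (m - 1)]
      simp only [Nat.add_sub_cancel]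
    rw [Finset.mul_sum, Finset.mul_sum]
    rw [← htop, hshift]
    refine Finset.sum_congr rfl (fun t ht => ?_)
    simp only [Finset.mem_Icc] at ht
    rw [show m - t = (m - (t + 1)) + 1 by omega, pow_succ, pow_succ]
    ring
  rw [mul_add, mul_add, e1]
  rw [mul_add, mul_add, Finset.mul_sum, Finset.mul_sum, e2, Finset.mul_sum]
  ring

lemma idB (m : ℕ) (hm : 2 ≤ m) :
    (1 - PowerSeries.X) ^ 2 * Rmk m 1
      = PowerSeries.X * Rmk m m
          + PowerSeries.X * (1 - PowerSeries.X) ^ (m + 1) - PowerSeries.X ^ (m + 1) := by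
  set X := PowerSeries.X (R := ℤ)
  set Y := 1 - X with hY
  unfold Rmk
  rw [Finset.Icc_eq_empty (show ¬ (1:ℕ) ≤ 1 - 1 by omega),
      Finset.Icc_eq_empty (show ¬ m ≤ m - 1 by omega),
      Finset.sum_empty]
  simp only [Finset.sum_empty, add_zero]
  have htop : ∑ t ∈ Finset.Icc 2 m, X ^ t * Y ^ (m - t + 2)
      = (∑ t ∈ Finset.Icc 2 (m - 1), X ^ t * Y ^ (m - t + 2)) + X ^ m * Y ^ 2 := by
    rw [show m = (m - 1) + 1 by omega, Finset.sum_Icc_succ_top (by omega)]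
    simp only [Nat.add_sub_cancel]
    rw [show m - 1 + 1 - (m - 1 + 1) + 2 = 2 by omega]
  have hshift : ∑ t ∈ Finset.Icc 2 m, X ^ t * Y ^ (m - t + 2)
      = ∑ j ∈ Finset.Icc 1 (m - 1), X ^ (j + 1) * Y ^ (m - (j + 1) + 2) := by
    rw [show (2:ℕ) = 1 + 1 from rfl, show m = (m - 1) + 1 by omega,
      sum_Icc_shift (fun t => X ^ t * Y ^ ((m - 1) + 1 - t + 2)) 1 (m - 1)]
    simp only [Nat.add_sub_cancel]
  have e2 : X * ∑ j ∈ Finset.Icc 1 (m - 1), X ^ j * Y ^ (m - j + 1)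
      = (∑ t ∈ Finset.Icc 2 (m - 1), X ^ t * Y ^ (m - t + 2)) + X ^ m * Y ^ 2 := by
    rw [Finset.mul_sum, ← htop, hshift]
    refine Finset.sum_congr rfl (fun j hj => ?_)
    simp only [Finset.mem_Icc] at hj
    rw [show m - (j + 1) + 2 = m - j + 1 by omega, pow_succ]
    ring
  have e1 : Y ^ 2 * ∑ t ∈ Finset.Icc 1 (m - 1), X ^ t * Y ^ (m - t)
      = X * Y ^ (m + 1) + ∑ t ∈ Finset.Icc 2 (m - 1), X ^ t * Y ^ (m - t + 2) := by
    rw [Finset.mul_sum, sum_Icc_bot (fun t => Y ^ 2 * (X ^ t * Y ^ (m - t))) 1 (m - 1) (by omega)]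
    congr 1
    · rw [pow_one, show m + 1 = (m - 1) + 2 by omega, pow_add]
      ring
    · refine Finset.sum_congr rfl (fun t ht => ?_)
      rw [show m - t + 2 = (m - t) + 2 from rfl, pow_add]
      ring
  rw [mul_add, e1, mul_add, e2]
  ring

lemma oneSubX_ne_zero : (1 - PowerSeries.X : PowerSeries ℤ) ≠ 0 := by
  intro h
  have h2 := congrArg (PowerSeries.constantCoeff) h
  simp [map_sub] at h2

lemma U_ne_zero (m : ℕ) (hm : 1 ≤ m) :
    (1 - PowerSeries.X) ^ (m + 1) - PowerSeries.X ^ m ≠ (0 : PowerSeries ℤ) := by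
  intro h
  have h2 := congrArg (PowerSeries.constantCoeff) h
  rw [map_sub, map_pow, map_pow, map_sub] at h2
  simp [zero_pow (show m ≠ 0 by omega)] at h2

/-- For `m ≥ 2` and `1 ≤ k ≤ m`,
`((1-X)^{m+1} - X^m) · F_{m,k}(X)
  = X^m + ∑_{j=1}^{k-1} X^j (1-X)^{m-j+1} + ∑_{t=k}^{m-1} X^t (1-X)^{m-t}`
in `ℤ[[X]]`. -/
theorem Fmk_generating_function (m k : ℕ) (hm : 2 ≤ m) (hk1 : 1 ≤ k) (hk2 : k ≤ m) :
    ((1 - PowerSeries.X) ^ (m + 1) - PowerSeries.X ^ m) * Fmk m k =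
      PowerSeries.X ^ m
        + ∑ j ∈ Finset.Icc 1 (k - 1),
            PowerSeries.X ^ j * (1 - PowerSeries.X) ^ (m - j + 1)
        + ∑ t ∈ Finset.Icc k (m - 1),
            PowerSeries.X ^ t * (1 - PowerSeries.X) ^ (m - t) := by
  set Xp := PowerSeries.X (R := ℤ) with hXp
  set U := (1 - Xp) ^ (m + 1) - Xp ^ m with hU
  suffices h : U * Fmk m k = Rmk m k by
    rw [h]
    unfold Rmk
    rfl
  have hrec : ∀ j, 2 ≤ j → j ≤ m →
      (1 - Xp) * (U * Fmk m j - Rmk m j) = Xp * (U * Fmk m (j - 1) - Rmk m (j - 1)) := by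
    intro j h2 hjm
    have hA := recA m j hm h2 hjm
    have hB := idA m (j - 1) hm (by omega) (by omega)
    rw [show j - 1 + 1 = j by omega] at hB
    calc (1 - Xp) * (U * Fmk m j - Rmk m j)
        = U * ((1 - Xp) * Fmk m j) - (1 - Xp) * Rmk m j := by ring
      _ = U * (Xp * (1 + Fmk m (j - 1)))
            - (Xp * Rmk m (j - 1) + Xp * (1 - Xp) ^ (m + 1) - Xp ^ (m + 1)) := by
          rw [hA, hB]
      _ = Xp * (U * Fmk m (j - 1) - Rmk m (j - 1)) := by
          rw [hU]; ring
  have hrec1 : (1 - Xp) ^ 2 * (U * Fmk m 1 - Rmk m 1)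
      = Xp * (U * Fmk m m - Rmk m m) := by
    have hA := recB m hm
    have hB := idB m hm
    calc (1 - Xp) ^ 2 * (U * Fmk m 1 - Rmk m 1)
        = U * ((1 - Xp) ^ 2 * Fmk m 1) - (1 - Xp) ^ 2 * Rmk m 1 := by ring
      _ = U * (Xp * (1 + Fmk m m))
            - (Xp * Rmk m m + Xp * (1 - Xp) ^ (m + 1) - Xp ^ (m + 1)) := by
          rw [hA, hB]
      _ = Xp * (U * Fmk m m - Rmk m m) := by
          rw [hU]; ring
  have hchain : ∀ j, 1 ≤ j → j ≤ m →
      (1 - Xp) ^ (j - 1) * (U * Fmk m j - Rmk m j)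
        = Xp ^ (j - 1) * (U * Fmk m 1 - Rmk m 1) := by
    intro j
    induction j with
    | zero => omega
    | succ n ih =>
      intro h1 h2
      rcases Nat.eq_zero_or_pos n with h0 | h0
      · subst h0; simp
      · have ihh := ih (by omega) (by omega)
        have hr := hrec (n + 1) (by omega) h2
        rw [show n + 1 - 1 = n from rfl] at hr ⊢
        calc (1 - Xp) ^ n * (U * Fmk m (n + 1) - Rmk m (n + 1))
            = (1 - Xp) ^ (n - 1) * ((1 - Xp) * (U * Fmk m (n + 1) - Rmk m (n + 1))) := by
              rw [← mul_assoc, ← pow_succ, show n - 1 + 1 = n by omega]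
          _ = (1 - Xp) ^ (n - 1) * (Xp * (U * Fmk m n - Rmk m n)) := by
              rw [hr]
          _ = Xp * ((1 - Xp) ^ (n - 1) * (U * Fmk m n - Rmk m n)) := by ring
          _ = Xp * (Xp ^ (n - 1) * (U * Fmk m 1 - Rmk m 1)) := by rw [ihh]
          _ = Xp ^ n * (U * Fmk m 1 - Rmk m 1) := by
              rw [← mul_assoc, ← pow_succ', show n - 1 + 1 = n by omega]
  have hcm := hchain m (by omega) le_rfl
  have hDm : U * Fmk m m - Rmk m m = 0 := by
    have key : ((1 - Xp) ^ (m + 1) - Xp ^ m) * (U * Fmk m m - Rmk m m) = 0 := by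
      have : (1 - Xp) ^ (m + 1) * (U * Fmk m m - Rmk m m)
          = Xp ^ m * (U * Fmk m m - Rmk m m) := by
        calc (1 - Xp) ^ (m + 1) * (U * Fmk m m - Rmk m m)
            = (1 - Xp) ^ 2 * ((1 - Xp) ^ (m - 1) * (U * Fmk m m - Rmk m m)) := by
              rw [← mul_assoc, ← pow_add, show 2 + (m - 1) = m + 1 by omega]
          _ = (1 - Xp) ^ 2 * (Xp ^ (m - 1) * (U * Fmk m 1 - Rmk m 1)) := by rw [hcm]
          _ = Xp ^ (m - 1) * ((1 - Xp) ^ 2 * (U * Fmk m 1 - Rmk m 1)) := by ring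
          _ = Xp ^ (m - 1) * (Xp * (U * Fmk m m - Rmk m m)) := by rw [hrec1]
          _ = Xp ^ m * (U * Fmk m m - Rmk m m) := by
              rw [← mul_assoc, ← pow_succ, show m - 1 + 1 = m by omega]
      rw [sub_mul, this, sub_self]
    rcases mul_eq_zero.1 key with h | h
    · exact absurd h (U_ne_zero m (by omega))
    · exact h
  have hD1 : U * Fmk m 1 - Rmk m 1 = 0 := by
    have h0 : (1 - Xp) ^ 2 * (U * Fmk m 1 - Rmk m 1) = 0 := by
      rw [hrec1, hDm, mul_zero]
    rcases mul_eq_zero.1 h0 with h | h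
    · exact absurd h (pow_ne_zero _ oneSubX_ne_zero)
    · exact h
  have hDk : U * Fmk m k - Rmk m k = 0 := by
    have hc := hchain k hk1 hk2
    rw [hD1, mul_zero] at hc
    rcases mul_eq_zero.1 hc with h | h
    · exact absurd h (pow_ne_zero _ oneSubX_ne_zero)
    · exact h
  have := sub_eq_zero.1 hDk
  exact this
end
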